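/- Consider a finite weighted complete graph on vertex set V with nonnegative edge weights, whose vertices are ordered v_1, ..., v_{|V|} by iteratively removing the vertex of minimum total adjacent weight (SortVertices). Let 1 \le b < c \le |V|, U = \{v_b, ..., v_c\}, W = \{v_1, ..., v_{b-1}\}. Assume there exists \alpha \ge 0 such that for all v \in U, \alpha w(v, W) \ge w(v, U). Let f = d(v_b, W). Then for every nonempty X \subseteq U, d(X, X \cup W) \le (1 + \alpha)^2 f. -/

import Mathlib

/-- The set of (cross) edges with one endpoint in `X` and the other in `W`,
as unordered pairs of distinct vertices. -/
def crossE {V : Type*} [DecidableEq V] (X W : Finset V) : Finset (Sym2 V) :=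
  ((X ×ˢ W).filter fun p => p.1 ≠ p.2).image (fun p => Sym2.mk p.1 p.2)

/-- Total weight of the cross edges from `X` to `W`. -/
noncomputable def wsum {V : Type*} [DecidableEq V] (w : Sym2 V → ℝ)
    (X W : Finset V) : ℝ :=
  ∑ e ∈ crossE X W, w e

/-- Density of the cross edges from `X` to `W`. -/
noncomputable def dens {V : Type*} [DecidableEq V] (w : Sym2 V → ℝ)
    (X W : Finset V) : ℝ :=
  wsum w X W / ((crossE X W).card : ℝ)

section Helpers
open Finset


variable {V : Type*} [DecidableEq V]

lemma sum_union_le {β : Type*} [DecidableEq β] (a b : Finset β) (g : β → ℝ)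
    (hg : ∀ e, 0 ≤ g e) : ∑ e ∈ a ∪ b, g e ≤ ∑ e ∈ a, g e + ∑ e ∈ b, g e := by
  have h := Finset.sum_union_inter (s₁ := a) (s₂ := b) (f := g)
  have : 0 ≤ ∑ e ∈ a ∩ b, g e := Finset.sum_nonneg fun e _ => hg e
  linarith

lemma sum_biUnion_le' {ι β : Type*} [DecidableEq ι] [DecidableEq β]
    (s : Finset ι) (t : ι → Finset β) (g : β → ℝ) (hg : ∀ e, 0 ≤ g e) :
    ∑ e ∈ s.biUnion t, g e ≤ ∑ x ∈ s, ∑ e ∈ t x, g e := by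
  induction s using Finset.induction_on with
  | empty => simp
  | @insert a s ha ih =>
      rw [Finset.biUnion_insert, Finset.sum_insert ha]
      calc ∑ e ∈ t a ∪ s.biUnion t, g e ≤ _ + _ := sum_union_le _ _ g hg
        _ ≤ _ := by linarith

lemma crossE_mono_right (X : Finset V) {W W' : Finset V} (h : W ⊆ W') :
    crossE X W ⊆ crossE X W' :=
  Finset.image_subset_image (Finset.filter_subset_filter _
    (Finset.product_subset_product (Finset.Subset.refl X) h))

lemma wsum_nonneg (w : Sym2 V → ℝ) (hw : ∀ e, 0 ≤ w e) (X W : Finset V) :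
    0 ≤ wsum w X W := Finset.sum_nonneg fun e _ => hw e

lemma wsum_mono_right (w : Sym2 V → ℝ) (hw : ∀ e, 0 ≤ w e) (X : Finset V)
    {W W' : Finset V} (h : W ⊆ W') : wsum w X W ≤ wsum w X W' :=
  Finset.sum_le_sum_of_subset_of_nonneg (crossE_mono_right X h) fun e _ _ => hw e

lemma crossE_union_subset (X A B : Finset V) :
    crossE X (A ∪ B) ⊆ crossE X A ∪ crossE X B := by
  intro e he
  simp only [crossE, Finset.mem_image, Finset.mem_filter, Finset.mem_product,
    Finset.mem_union] at he ⊢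
  obtain ⟨⟨x, y⟩, ⟨⟨hx, hy⟩, hne⟩, rfl⟩ := he
  rcases hy with hy | hy
  · exact Or.inl ⟨(x, y), ⟨⟨hx, hy⟩, hne⟩, rfl⟩
  · exact Or.inr ⟨(x, y), ⟨⟨hx, hy⟩, hne⟩, rfl⟩

lemma wsum_union_le (w : Sym2 V → ℝ) (hw : ∀ e, 0 ≤ w e) (X A B : Finset V) :
    wsum w X (A ∪ B) ≤ wsum w X A + wsum w X B := by
  calc wsum w X (A ∪ B) ≤ ∑ e ∈ crossE X A ∪ crossE X B, w e :=
        Finset.sum_le_sum_of_subset_of_nonneg (crossE_union_subset X A B) fun e _ _ => hw e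
    _ ≤ _ := sum_union_le _ _ w hw

lemma crossE_eq_biUnion (X Y : Finset V) :
    crossE X Y = X.biUnion fun x => crossE {x} Y := by
  ext e
  simp only [crossE, Finset.mem_biUnion, Finset.mem_image, Finset.mem_filter,
    Finset.mem_product, Finset.mem_singleton]
  constructor
  · rintro ⟨⟨x, y⟩, ⟨⟨hx, hy⟩, hne⟩, rfl⟩
    exact ⟨x, hx, (x, y), ⟨⟨rfl, hy⟩, hne⟩, rfl⟩
  · rintro ⟨x, hx, ⟨x', y⟩, ⟨⟨rfl, hy⟩, hne⟩, rfl⟩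
    exact ⟨(x', y), ⟨⟨hx, hy⟩, hne⟩, rfl⟩

lemma wsum_le_sum (w : Sym2 V → ℝ) (hw : ∀ e, 0 ≤ w e) (X Y : Finset V) :
    wsum w X Y ≤ ∑ x ∈ X, wsum w {x} Y := by
  rw [wsum, crossE_eq_biUnion]
  exact sum_biUnion_le' X _ w hw

lemma crossE_card_of_disjoint {X W : Finset V} (h : Disjoint X W) :
    (crossE X W).card = X.card * W.card := by
  rw [crossE]
  have hfilter : (X ×ˢ W).filter (fun p => p.1 ≠ p.2) = X ×ˢ W := by
    apply Finset.filter_true_of_mem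
    rintro ⟨x, y⟩ hp
    simp only [Finset.mem_product] at hp
    intro heq
    simp only at heq
    exact (Finset.disjoint_left.mp h hp.1) (heq ▸ hp.2)
  rw [hfilter, Finset.card_image_of_injOn, Finset.card_product]
  rintro ⟨a, b⟩ hab ⟨c, d⟩ hcd heq
  simp only [Finset.mem_coe, Finset.mem_product] at hab hcd
  rw [Sym2.mk_eq_mk_iff] at heq
  rcases heq with heq | heq
  · exact heq
  · simp only [Prod.swap_prod_mk, Prod.mk.injEq] at heq
    exact absurd hcd.2 (heq.1 ▸ fun hd => (Finset.disjoint_left.mp h hab.1) hd)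

lemma crossE_empty_right (X : Finset V) : crossE X (∅ : Finset V) = ∅ := by
  simp [crossE]

lemma wsum_empty_right (w : Sym2 V → ℝ) (X : Finset V) : wsum w X ∅ = 0 := by
  simp [wsum, crossE_empty_right]

end Helpers

theorem stmt_8 {V : Type*} [Fintype V] [DecidableEq V]
    (w : Sym2 V → ℝ) (hw : ∀ e, 0 ≤ w e)
    (n : ℕ) (hn : n = Fintype.card V) (v : Fin n ≃ V)
    -- the order is produced by iteratively removing the vertex of minimum
    -- total adjacent weight:
    (horder : ∀ c : Fin n, ∀ x ∈ (Finset.Iic c).image v,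
      wsum w {v c} ((Finset.Iic c).image v) ≤ wsum w {x} ((Finset.Iic c).image v))
    (b c : Fin n) (hbc : b < c)
    (U W : Finset V) (hU : U = (Finset.Icc b c).image v)
    (hW : W = (Finset.Iio b).image v)
    (α : ℝ) (hα : 0 ≤ α)
    (hcross : ∀ x ∈ U, wsum w {x} U ≤ α * wsum w {x} W)
    (f : ℝ) (hf : f = dens w {v b} W)
    (X : Finset V) (hX : X ⊆ U) (hXne : X.Nonempty) :
    dens w X (X ∪ W) ≤ (1 + α) ^ 2 * f := by
  have hvbU : v b ∈ U := by
    rw [hU]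
    exact Finset.mem_image_of_mem v (Finset.mem_Icc.mpr ⟨le_refl b, le_of_lt hbc⟩)
  by_cases hWe : W = ∅
  · -- degenerate case: W is empty
    subst hWe
    have hz : ∀ x ∈ U, wsum w {x} U = 0 := by
      intro x hx
      have h1 := hcross x hx
      rw [wsum_empty_right, mul_zero] at h1
      exact le_antisymm h1 (wsum_nonneg w hw _ _)
    have hnum : wsum w X (X ∪ ∅) = 0 := by
      rw [Finset.union_empty]
      refine le_antisymm ?_ (wsum_nonneg w hw _ _)
      calc wsum w X X ≤ ∑ x ∈ X, wsum w {x} X := wsum_le_sum w hw X X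
        _ ≤ ∑ x ∈ X, (0 : ℝ) := by
            refine Finset.sum_le_sum fun x hx => ?_
            calc wsum w {x} X ≤ wsum w {x} U := wsum_mono_right w hw _ hX
              _ = 0 := hz x (hX hx)
        _ = 0 := by simp
    have hf0 : f = 0 := by
      rw [hf, dens, wsum_empty_right, zero_div]
    rw [hf0, mul_zero, dens, hnum, zero_div]
  · -- main case: W is nonempty
    have hdUW : Disjoint U W := by
      rw [hU, hW, Finset.disjoint_left]
      intro a haU haW
      obtain ⟨i, hi, rfl⟩ := Finset.mem_image.mp haU
      obtain ⟨j, hj, hji⟩ := Finset.mem_image.mp haW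
      have : i = j := v.injective hji.symm
      rw [Finset.mem_Icc] at hi
      rw [Finset.mem_Iio] at hj
      exact absurd (this ▸ hi.1) (not_le.mpr hj)
    have hvbW : v b ∉ W := Finset.disjoint_left.mp hdUW hvbU
    -- key estimate: every x in U has small weight to W
    have hxW : ∀ x ∈ U, wsum w {x} W ≤ (1 + α) * wsum w {v b} W := by
      intro x hx
      rw [hU] at hx
      obtain ⟨i, hi, rfl⟩ := Finset.mem_image.mp hx
      rw [Finset.mem_Icc] at hi
      set Z := (Finset.Iic i).image v with hZdef
      have hWZ : W ⊆ Z := by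
        rw [hW]
        exact Finset.image_subset_image fun j hj =>
          Finset.mem_Iic.mpr (le_of_lt (lt_of_lt_of_le (Finset.mem_Iio.mp hj) hi.1))
      have hZWU : Z ⊆ W ∪ U := by
        intro y hy
        obtain ⟨j, hj, rfl⟩ := Finset.mem_image.mp hy
        rw [Finset.mem_Iic] at hj
        rcases lt_or_ge j b with h | h
        · exact Finset.mem_union_left _ (hW ▸ Finset.mem_image_of_mem v (Finset.mem_Iio.mpr h))
        · exact Finset.mem_union_right _
            (hU ▸ Finset.mem_image_of_mem v (Finset.mem_Icc.mpr ⟨h, le_trans hj hi.2⟩))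
      have hbZ : v b ∈ Z := Finset.mem_image_of_mem v (Finset.mem_Iic.mpr hi.1)
      calc wsum w {v i} W ≤ wsum w {v i} Z := wsum_mono_right w hw _ hWZ
        _ ≤ wsum w {v b} Z := horder i (v b) hbZ
        _ ≤ wsum w {v b} (W ∪ U) := wsum_mono_right w hw _ hZWU
        _ ≤ wsum w {v b} W + wsum w {v b} U := wsum_union_le w hw _ _ _
        _ ≤ wsum w {v b} W + α * wsum w {v b} W := by linarith [hcross (v b) hvbU]
        _ = (1 + α) * wsum w {v b} W := by ring
    have hwb0 : (0:ℝ) ≤ wsum w {v b} W := wsum_nonneg w hw _ _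
    -- numerator bound
    have hnum : wsum w X (X ∪ W) ≤
        (X.card : ℝ) * ((1 + α) ^ 2 * wsum w {v b} W) := by
      calc wsum w X (X ∪ W) ≤ ∑ x ∈ X, wsum w {x} (X ∪ W) := wsum_le_sum w hw _ _
        _ ≤ ∑ x ∈ X, (1 + α) ^ 2 * wsum w {v b} W := by
            refine Finset.sum_le_sum fun x hx => ?_
            have h1 := wsum_union_le w hw {x} X W
            have h2 : wsum w {x} X ≤ wsum w {x} U := wsum_mono_right w hw _ hX
            have h3 := hcross x (hX hx)
            have h4 := hxW x (hX hx)
            have h5 : (0:ℝ) ≤ wsum w {x} W := wsum_nonneg w hw _ _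
            nlinarith
        _ = (X.card : ℝ) * ((1 + α) ^ 2 * wsum w {v b} W) := by
            rw [Finset.sum_const, nsmul_eq_mul]
    -- denominator bounds
    have hdXW : Disjoint X W := Finset.disjoint_of_subset_left hX hdUW
    have hcardXW : (crossE X W).card = X.card * W.card := crossE_card_of_disjoint hdXW
    have hsub : crossE X W ⊆ crossE X (X ∪ W) :=
      crossE_mono_right X Finset.subset_union_right
    have hden : (X.card * W.card : ℝ) ≤ ((crossE X (X ∪ W)).card : ℝ) := by
      have := Finset.card_le_card hsub
      rw [hcardXW] at this
      exact_mod_cast this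
    have hXpos : 0 < X.card := Finset.card_pos.mpr hXne
    have hWpos : 0 < W.card := Finset.card_pos.mpr (Finset.nonempty_of_ne_empty hWe)
    have hdpos : (0:ℝ) < (X.card * W.card : ℝ) := by
      have h := Nat.mul_pos hXpos hWpos
      exact_mod_cast h
    -- compute f
    have hfval : f = wsum w {v b} W / (W.card : ℝ) := by
      rw [hf, dens]
      congr 1
      rw [crossE_card_of_disjoint (Finset.disjoint_singleton_left.mpr hvbW),
        Finset.card_singleton, one_mul]
    have h1α : (0:ℝ) ≤ (1 + α)^2 := by positivity
    calc dens w X (X ∪ W)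
        ≤ ((X.card : ℝ) * ((1 + α) ^ 2 * wsum w {v b} W)) / ((X.card : ℝ) * (W.card : ℝ)) := by
          rw [dens]
          apply div_le_div₀ (by positivity) hnum hdpos
          · exact_mod_cast hden
      _ = (1 + α) ^ 2 * (wsum w {v b} W / (W.card : ℝ)) := by
          rw [mul_div_mul_left _ _ (by exact_mod_cast hXpos.ne' : (X.card:ℝ) ≠ 0), mul_div_assoc]
      _ = (1 + α) ^ 2 * f := by rw [hfval]
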